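/- Every core-compact well-filtered T0 space is sober. -/

import Mathlib

open Set

def RelCpt {X : Type*} [TopologicalSpace X] (A B : Set X) : Prop :=
  A ⊆ B ∧ ∀ 𝒰 : Set (Set X), (∀ U ∈ 𝒰, IsOpen U) → B ⊆ ⋃₀ 𝒰 →
    ∃ 𝒱 ⊆ 𝒰, 𝒱.Finite ∧ A ⊆ ⋃₀ 𝒱

def Saturated {X : Type*} [TopologicalSpace X] (A : Set X) : Prop :=
  A = ⋂₀ {U : Set X | IsOpen U ∧ A ⊆ U}

def WellFiltered (X : Type*) [TopologicalSpace X] : Prop :=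
  ∀ 𝒦 : Set (Set X), 𝒦.Nonempty →
    (∀ K ∈ 𝒦, IsCompact K ∧ Saturated K) →
    (∀ K₁ ∈ 𝒦, ∀ K₂ ∈ 𝒦, ∃ K₃ ∈ 𝒦, K₃ ⊆ K₁ ∧ K₃ ⊆ K₂) →
    ∀ U : Set X, IsOpen U → ⋂₀ 𝒦 ⊆ U → ∃ K ∈ 𝒦, K ⊆ U

def OmegaWellFiltered (X : Type*) [TopologicalSpace X] : Prop :=
  ∀ K : ℕ → Set X, (∀ n, IsCompact (K n) ∧ Saturated (K n)) →
    (∀ m n : ℕ, ∃ k, K k ⊆ K m ∧ K k ⊆ K n) →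
    ∀ U : Set X, IsOpen U → (⋂ n, K n) ⊆ U → ∃ n, K n ⊆ U

def SatWellFiltered (X : Type*) [TopologicalSpace X] : Prop :=
  ∀ 𝒜 : Set (Set X), 𝒜.Nonempty →
    (∀ A ∈ 𝒜, Saturated A) →
    (∀ A₁ ∈ 𝒜, ∀ A₂ ∈ 𝒜, ∃ A₃ ∈ 𝒜, RelCpt A₃ A₁ ∧ RelCpt A₃ A₂) →
    ∀ U : Set X, IsOpen U → ⋂₀ 𝒜 ⊆ U → ∃ A ∈ 𝒜, A ⊆ U

def SatOmegaWellFiltered (X : Type*) [TopologicalSpace X] : Prop :=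
  ∀ A : ℕ → Set X, (∀ n, Saturated (A n)) →
    (∀ m n : ℕ, ∃ k, RelCpt (A k) (A m) ∧ RelCpt (A k) (A n)) →
    ∀ U : Set X, IsOpen U → (⋂ n, A n) ⊆ U → ∃ n, A n ⊆ U

def OpenWellFiltered (X : Type*) [TopologicalSpace X] : Prop :=
  ∀ 𝒜 : Set (Set X), 𝒜.Nonempty →
    (∀ A ∈ 𝒜, IsOpen A) →
    (∀ A₁ ∈ 𝒜, ∀ A₂ ∈ 𝒜, ∃ A₃ ∈ 𝒜, RelCpt A₃ A₁ ∧ RelCpt A₃ A₂) →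
    ∀ U : Set X, IsOpen U → ⋂₀ 𝒜 ⊆ U → ∃ A ∈ 𝒜, A ⊆ U

def OpenOmegaWellFiltered (X : Type*) [TopologicalSpace X] : Prop :=
  ∀ A : ℕ → Set X, (∀ n, IsOpen (A n)) →
    (∀ m n : ℕ, ∃ k, RelCpt (A k) (A m) ∧ RelCpt (A k) (A n)) →
    ∀ U : Set X, IsOpen U → (⋂ n, A n) ⊆ U → ∃ n, A n ⊆ U

def CoreCompact (X : Type*) [TopologicalSpace X] : Prop :=
  ∀ (x : X) (U : Set X), IsOpen U → x ∈ U → ∃ V : Set X, IsOpen V ∧ x ∈ V ∧ RelCpt V U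

def Sober (X : Type*) [TopologicalSpace X] : Prop :=
  ∀ F : Set X, IsClosed F → F.Nonempty →
    (∀ F₁ F₂ : Set X, IsClosed F₁ → IsClosed F₂ → F ⊆ F₁ ∪ F₂ → F ⊆ F₁ ∨ F ⊆ F₂) →
    ∃! x : X, F = closure {x}

set_option linter.unusedSectionVars false

section Aux
variable {X : Type*} [TopologicalSpace X]

def Sat (s : Set X) : Set X := ⋂₀ {U : Set X | IsOpen U ∧ s ⊆ U}

lemma subset_sat (s : Set X) : s ⊆ Sat s := fun _ hx _ hU => hU.2 hx

lemma sat_subset_open {s U : Set X} (hU : IsOpen U) (h : s ⊆ U) : Sat s ⊆ U :=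
  sInter_subset_of_mem ⟨hU, h⟩

lemma saturated_sat (s : Set X) : Saturated (Sat s) := by
  apply Subset.antisymm
  · intro x hx U hU
    exact hx U ⟨hU.1, (subset_sat s).trans hU.2⟩
  · intro x hx U hU
    exact hx U ⟨hU.1, sInter_subset_of_mem ⟨hU.1, hU.2⟩⟩

lemma isCompact_sat {s : Set X} (hs : IsCompact s) : IsCompact (Sat s) := by
  refine isCompact_of_finite_subcover fun {ι} U hU hcov => ?_
  obtain ⟨t, ht⟩ := hs.elim_finite_subcover U hU ((subset_sat s).trans hcov)
  exact ⟨t, fun x hx => hx _ ⟨isOpen_biUnion fun i _ => hU i, ht⟩⟩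

lemma sat_mono {s t : Set X} (h : s ⊆ t) : Sat s ⊆ Sat t := by
  intro x hx U hU
  exact hx U ⟨hU.1, h.trans hU.2⟩

/-- Lemma A: in a well-filtered space, the intersection of a `RelCpt`-descending
sequence of open sets contained in an open `O` forces some member inside `O`. -/
lemma lemmaA (hwf : WellFiltered X) (W : ℕ → Set X)
    (hWo : ∀ n, IsOpen (W n)) (hWr : ∀ n, RelCpt (W (n+1)) (W n))
    (O : Set X) (hO : IsOpen O) (hKO : (⋂ n, W n) ⊆ O) : ∃ n, W n ⊆ O := by
  by_contra hcon
  push_neg at hcon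
  have hmono : ∀ {m n : ℕ}, m ≤ n → W n ⊆ W m := by
    intro m n h
    induction h with
    | refl => exact Subset.rfl
    | step h ih => exact ((hWr _).1).trans ih
  -- the Rudin family
  set S : Set (Set X) := {C | IsClosed C ∧ C ⊆ Oᶜ ∧ ∀ n, (C ∩ W n).Nonempty} with hS
  have hOc : Oᶜ ∈ S := by
    refine ⟨hO.isClosed_compl, Subset.rfl, fun n => ?_⟩
    obtain ⟨y, hy1, hy2⟩ := not_subset.mp (hcon n)
    exact ⟨y, hy2, hy1⟩
  -- chains have lower bounds
  have hZ : ∀ c ⊆ S, IsChain (· ⊆ ·) c → c.Nonempty → ∃ lb ∈ S, ∀ s ∈ c, lb ⊆ s := by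
    intro c hcS hchain ⟨C₀, hC₀⟩
    refine ⟨⋂₀ c, ⟨isClosed_sInter fun C hC => (hcS hC).1,
      (sInter_subset_of_mem hC₀).trans (hcS hC₀).2.1, fun n => ?_⟩,
      fun s hs => sInter_subset_of_mem hs⟩
    by_contra hempty
    rw [Set.not_nonempty_iff_eq_empty] at hempty
    have hcov : W n ⊆ ⋃₀ (compl '' c) := by
      intro x hx
      have hxn : x ∉ ⋂₀ c := by
        intro hxc
        exact absurd hempty (Set.nonempty_iff_ne_empty.mp ⟨x, hxc, hx⟩)
      rw [mem_sInter] at hxn; push_neg at hxn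
      obtain ⟨C, hC, hxC⟩ := hxn
      exact ⟨Cᶜ, mem_image_of_mem _ hC, hxC⟩
    obtain ⟨𝒱, h𝒱sub, h𝒱fin, h𝒱cov⟩ := (hWr n).2 (compl '' c)
      (by rintro U ⟨C, hC, rfl⟩; exact ((hcS hC).1).isOpen_compl) hcov
    -- the finitely many chain elements whose complements appear in 𝒱
    set t : Set (Set X) := {C ∈ c | Cᶜ ∈ 𝒱} with ht
    have htfin : t.Finite := by
      have : t ⊆ compl '' 𝒱 := by
        rintro C ⟨hC, hCc⟩
        exact ⟨Cᶜ, hCc, compl_compl C⟩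
      exact (h𝒱fin.image _).subset this
    have htne : t.Nonempty := by
      obtain ⟨y, hy⟩ := (hcS hC₀).2.2 (n+1)
      obtain ⟨v, hv, hyv⟩ := h𝒱cov hy.2
      obtain ⟨C, hC, rfl⟩ := h𝒱sub hv
      exact ⟨C, hC, hv⟩
    obtain ⟨m, hmt, hmin⟩ := Set.Finite.exists_minimalFor id t htfin htne
    have hmall : ∀ C ∈ t, m ⊆ C := by
      intro C hCt
      rcases eq_or_ne m C with rfl | hne
      · exact Subset.rfl
      · rcases hchain hmt.1 hCt.1 hne with h | h
        · exact h
        · exact hmin hCt h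
    have hsub : W (n+1) ⊆ mᶜ := by
      intro y hy
      obtain ⟨v, hv, hyv⟩ := h𝒱cov hy
      obtain ⟨C, hC, rfl⟩ := h𝒱sub hv
      exact fun hym => hyv (hmall C ⟨hC, hv⟩ hym)
    obtain ⟨y, hy1, hy2⟩ := (hcS hmt.1).2.2 (n+1)
    exact hsub hy2 hy1
  obtain ⟨C, hCsub, hCmem, hCmin⟩ := zorn_superset_nonempty S hZ _ hOc
  -- minimality property (∗)
  have hstar : ∀ V : Set X, IsOpen V → (V ∩ C).Nonempty → ∃ m, C ∩ W m ⊆ V := by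
    intro V hV hVC
    by_contra hno
    push_neg at hno
    have hD : C \ V ∈ S := by
      refine ⟨hCmem.1.sdiff hV, (diff_subset).trans hCmem.2.1, fun n => ?_⟩
      obtain ⟨y, hy1, hy2⟩ := not_subset.mp (hno n)
      exact ⟨y, ⟨hy1.1, hy2⟩, hy1.2⟩
    have hsub2 : C ⊆ C \ V := hCmin hD diff_subset
    obtain ⟨z, hz1, hz2⟩ := hVC
    exact (hsub2 hz2).2 hz1
  -- pick points
  have hpick : ∀ n, (C ∩ W n).Nonempty := hCmem.2.2
  set x : ℕ → X := fun n => (hpick n).choose with hx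
  have hxC : ∀ n, x n ∈ C := fun n => (hpick n).choose_spec.1
  have hxW : ∀ n, x n ∈ W n := fun n => (hpick n).choose_spec.2
  -- tails are compact
  set E : ℕ → Set X := fun n => x '' {m | n ≤ m} with hE
  have hEcpt : ∀ n, IsCompact (E n) := by
    intro n
    refine isCompact_of_finite_subcover fun {ι} U hU hcov => ?_
    have hxn : x n ∈ ⋃ i, U i := hcov ⟨n, Nat.le_refl n, rfl⟩
    obtain ⟨i₀, hi₀⟩ := mem_iUnion.mp hxn
    obtain ⟨m₀, hm₀⟩ := hstar (U i₀) (hU i₀) ⟨x n, hi₀, hxC n⟩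
    have hftail : ∀ m, m₀ ≤ m → x m ∈ U i₀ := by
      intro m hm
      exact hm₀ ⟨hxC m, hmono hm (hxW m)⟩
    -- indices for the finitely many other points
    have hsel : ∀ m, n ≤ m → ∃ i, x m ∈ U i := by
      intro m hm
      exact mem_iUnion.mp (hcov ⟨m, hm, rfl⟩)
    classical
    set f : ℕ → ι := fun m => if h : n ≤ m then (hsel m h).choose else i₀ with hf
    refine ⟨insert i₀ ((Finset.range (m₀ + 1)).image f), ?_⟩
    rintro y ⟨m, hm, rfl⟩
    rcases le_or_gt m₀ m with h | h
    · exact mem_biUnion (Finset.mem_insert_self _ _) (hftail m h)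
    · have hmemt : f m ∈ insert i₀ ((Finset.range (m₀ + 1)).image f) :=
        Finset.mem_insert_of_mem (Finset.mem_image_of_mem f (Finset.mem_range.mpr (by omega)))
      refine mem_biUnion hmemt ?_
      have hm' : n ≤ m := hm
      rw [hf]
      simp only []
      rw [dif_pos hm']
      exact (hsel m hm').choose_spec
  -- apply well-filteredness to the saturated tails
  set K : ℕ → Set X := fun n => Sat (E n) with hK
  have hKmono : ∀ {m n : ℕ}, m ≤ n → K n ⊆ K m := by
    intro m n h
    exact sat_mono (image_mono fun j (hj : n ≤ j) => h.trans hj)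
  have hKW : ∀ n, K n ⊆ W n := by
    intro n
    refine sat_subset_open (hWo n) ?_
    rintro y ⟨m, hm, rfl⟩
    exact hmono hm (hxW m)
  obtain ⟨Q, ⟨n, rfl⟩, hQO⟩ := hwf {A | ∃ n, A = K n} ⟨K 0, 0, rfl⟩
    (by rintro A ⟨n, rfl⟩; exact ⟨isCompact_sat (hEcpt n), saturated_sat _⟩)
    (by rintro A₁ ⟨m, rfl⟩ A₂ ⟨n, rfl⟩
        exact ⟨K (max m n), ⟨_, rfl⟩, hKmono (le_max_left m n), hKmono (le_max_right m n)⟩)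
    O hO
    (by intro z hz
        refine hKO (mem_iInter.mpr fun n => ?_)
        exact hKW n (hz (K n) ⟨n, rfl⟩))
  have : x n ∈ O := hQO (subset_sat _ ⟨n, Nat.le_refl n, rfl⟩)
  exact hCmem.2.1 (hxC n) this


lemma finite_subcover_collect {𝒲 𝒰 : Set (Set X)} (h𝒲 : 𝒲.Finite)
    (h : ∀ S ∈ 𝒲, ∃ 𝒱 ⊆ 𝒰, 𝒱.Finite ∧ S ⊆ ⋃₀ 𝒱) :
    ∃ 𝒱 ⊆ 𝒰, 𝒱.Finite ∧ ⋃₀ 𝒲 ⊆ ⋃₀ 𝒱 := by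
  choose f hf1 hf2 hf3 using h
  refine ⟨{A | ∃ S, ∃ hS : S ∈ 𝒲, A ∈ f S hS}, ?_, ?_, ?_⟩
  · rintro A ⟨S, hS, hA⟩; exact hf1 S hS hA
  · have hsub : {A | ∃ S, ∃ hS : S ∈ 𝒲, A ∈ f S hS} ⊆ ⋃₀ {T | ∃ S, ∃ hS : S ∈ 𝒲, f S hS = T} := by
      rintro A ⟨S, hS, hA⟩; exact ⟨f S hS, ⟨S, hS, rfl⟩, hA⟩
    refine Set.Finite.subset (Set.Finite.sUnion (h𝒲.dependent_image f) ?_) hsub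
    rintro T ⟨S, hS, rfl⟩; exact hf2 S hS
  · rintro y ⟨S, hS, hy⟩
    obtain ⟨A, hA, hyA⟩ := hf3 S hS hy
    exact ⟨A, ⟨S, hS, hA⟩, hyA⟩

lemma interp (hcc : CoreCompact X) {V U : Set X} (hU : IsOpen U)
    (h : RelCpt V U) : ∃ W, IsOpen W ∧ RelCpt V W ∧ RelCpt W U := by
  classical
  have h1 : ∀ x, x ∈ U → ∃ W1, IsOpen W1 ∧ x ∈ W1 ∧ RelCpt W1 U := fun x hx => hcc x U hU hx
  choose g1 hg1o hg1m hg1r using h1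
  have h2 : ∀ x (hx : x ∈ U), ∃ W2, IsOpen W2 ∧ x ∈ W2 ∧ RelCpt W2 (g1 x hx) :=
    fun x hx => hcc x _ (hg1o x hx) (hg1m x hx)
  choose g2 hg2o hg2m hg2r using h2
  obtain ⟨𝒱, h𝒱sub, h𝒱fin, h𝒱cov⟩ := h.2 {S | ∃ x, ∃ hx : x ∈ U, S = g2 x hx}
    (by rintro S ⟨x, hx, rfl⟩; exact hg2o x hx)
    (fun y hy => ⟨g2 y hy, ⟨y, hy, rfl⟩, hg2m y hy⟩)
  have h3 : ∀ v (hv : v ∈ 𝒱), ∃ x, ∃ hx : x ∈ U, v = g2 x hx := fun v hv => h𝒱sub hv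
  choose xf hxf hveq using h3
  refine ⟨⋃₀ ({T | ∃ v, ∃ hv : v ∈ 𝒱, g1 (xf v hv) (hxf v hv) = T} : Set (Set X)), ?_, ⟨?_, ?_⟩, ⟨?_, ?_⟩⟩
  · exact isOpen_sUnion (by rintro T ⟨v, hv, rfl⟩; exact hg1o _ _)
  · intro y hy
    obtain ⟨v, hv, hyv⟩ := h𝒱cov hy
    refine ⟨g1 (xf v hv) (hxf v hv), ⟨v, hv, rfl⟩, ?_⟩
    exact (hg2r _ _).1 ((hveq v hv) ▸ hyv)
  · intro 𝒰 h𝒰o h𝒰cov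
    have key : ∀ S ∈ ({T | ∃ v, ∃ hv : v ∈ 𝒱, g2 (xf v hv) (hxf v hv) = T} : Set (Set X)),
        ∃ 𝒱' ⊆ 𝒰, 𝒱'.Finite ∧ S ⊆ ⋃₀ 𝒱' := by
      rintro S ⟨v, hv, rfl⟩
      exact (hg2r _ _).2 𝒰 h𝒰o (fun y hy => h𝒰cov ⟨g1 (xf v hv) (hxf v hv), ⟨v, hv, rfl⟩, hy⟩)
    obtain ⟨𝒱', hs, hfin, hcov⟩ := finite_subcover_collect (h𝒱fin.dependent_image _) key
    refine ⟨𝒱', hs, hfin, ?_⟩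
    intro y hy
    obtain ⟨v, hv, hyv⟩ := h𝒱cov hy
    exact hcov ⟨g2 (xf v hv) (hxf v hv), ⟨v, hv, rfl⟩, (hveq v hv) ▸ hyv⟩
  · rintro y ⟨T, ⟨v, hv, rfl⟩, hy⟩
    exact (hg1r _ _).1 hy
  · intro 𝒰 h𝒰o h𝒰cov
    have key : ∀ S ∈ ({T | ∃ v, ∃ hv : v ∈ 𝒱, g1 (xf v hv) (hxf v hv) = T} : Set (Set X)),
        ∃ 𝒱' ⊆ 𝒰, 𝒱'.Finite ∧ S ⊆ ⋃₀ 𝒱' := by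
      rintro S ⟨v, hv, rfl⟩
      exact (hg1r _ _).2 𝒰 h𝒰o h𝒰cov
    exact finite_subcover_collect (h𝒱fin.dependent_image _) key

lemma lemmaC (hcc : CoreCompact X) (hwf : WellFiltered X) {V U : Set X}
    (hU : IsOpen U) (h : RelCpt V U) :
    ∃ K : Set X, IsCompact K ∧ Saturated K ∧ V ⊆ K ∧ K ⊆ U := by
  have step : ∀ p : {W : Set X // IsOpen W ∧ RelCpt V W},
      ∃ q : {W : Set X // IsOpen W ∧ RelCpt V W}, RelCpt q.1 p.1 := by
    rintro ⟨W, hWo, hVW⟩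
    obtain ⟨W', hW'o, hVW', hW'W⟩ := interp hcc hWo hVW
    exact ⟨⟨W', hW'o, hVW'⟩, hW'W⟩
  choose f hf using step
  set seq : ℕ → {W : Set X // IsOpen W ∧ RelCpt V W} := fun n => f^[n] ⟨U, hU, h⟩ with hseq
  have hsucc : ∀ n, seq (n+1) = f (seq n) := fun n => Function.iterate_succ_apply' f n _
  have hWo : ∀ n, IsOpen (seq n).1 := fun n => (seq n).2.1
  have hWr : ∀ n, RelCpt ((seq (n+1)).1) ((seq n).1) := by
    intro n
    rw [hsucc n]
    exact hf (seq n)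
  set K : Set X := ⋂ n, (seq n).1 with hKdef
  have hVK : V ⊆ K := fun y hy => mem_iInter.mpr fun n => (seq n).2.2.1 hy
  have hKU : K ⊆ U := by
    intro y hy
    have h0 : seq 0 = ⟨U, hU, h⟩ := rfl
    have := mem_iInter.mp hy 0
    rw [h0] at this
    exact this
  refine ⟨K, ?_, ?_, hVK, hKU⟩
  · refine isCompact_of_finite_subcover fun {ι} Ucov hUcov hcov => ?_
    obtain ⟨n, hn⟩ := lemmaA hwf (fun n => (seq n).1) hWo hWr (⋃ i, Ucov i)
      (isOpen_iUnion hUcov) hcov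
    obtain ⟨𝒱, h𝒱sub, h𝒱fin, h𝒱cov⟩ := (hWr n).2 (Set.range Ucov)
      (by rintro S ⟨i, rfl⟩; exact hUcov i)
      (by intro y hy; obtain ⟨i, hyi⟩ := mem_iUnion.mp (hn hy); exact ⟨Ucov i, ⟨i, rfl⟩, hyi⟩)
    classical
    have hsel : ∀ v (hv : v ∈ 𝒱), ∃ i, Ucov i = v := fun v hv => h𝒱sub hv
    choose gi hgi using hsel
    have hfin2 : {i | ∃ v, ∃ hv : v ∈ 𝒱, gi v hv = i}.Finite := h𝒱fin.dependent_image _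
    refine ⟨hfin2.toFinset, ?_⟩
    intro y hy
    obtain ⟨v, hv, hyv⟩ := h𝒱cov (mem_iInter.mp hy (n+1))
    refine mem_biUnion (hfin2.mem_toFinset.mpr ⟨v, hv, rfl⟩) ?_
    rw [hgi v hv]
    exact hyv
  · apply Subset.antisymm
    · exact fun y hy A hA => hA.2 hy
    · intro y hy
      refine mem_iInter.mpr fun n => ?_
      exact hy ((seq n).1) ⟨hWo n, iInter_subset _ n⟩

end Aux

/-- Every core-compact well-filtered space is sober. -/
theorem stmt11 (X : Type*) [TopologicalSpace X] [T0Space X]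
    (hcc : CoreCompact X) (hwf : WellFiltered X) : Sober X := by
  intro F hFc hFne hFirr
  have hmeet : ∀ U V2 : Set X, IsOpen U → IsOpen V2 → (U ∩ F).Nonempty → (V2 ∩ F).Nonempty →
      ((U ∩ V2) ∩ F).Nonempty := by
    intro U V2 hU hV2 h1 h2
    by_contra hemp
    rw [Set.not_nonempty_iff_eq_empty] at hemp
    have hsub : F ⊆ Uᶜ ∪ V2ᶜ := by
      intro y hy
      by_cases hyU : y ∈ U
      · by_cases hyV : y ∈ V2
        · exact absurd hemp (Set.nonempty_iff_ne_empty.mp ⟨y, ⟨hyU, hyV⟩, hy⟩)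
        · exact Or.inr hyV
      · exact Or.inl hyU
    rcases hFirr Uᶜ V2ᶜ hU.isClosed_compl hV2.isClosed_compl hsub with h | h
    · obtain ⟨z, hz1, hz2⟩ := h1; exact h hz2 hz1
    · obtain ⟨z, hz1, hz2⟩ := h2; exact h hz2 hz1
  set 𝒦 : Set (Set X) :=
    {K | IsCompact K ∧ Saturated K ∧ ∃ V2 : Set X, IsOpen V2 ∧ (V2 ∩ F).Nonempty ∧ V2 ⊆ K} with h𝒦
  have hprod : ∀ U : Set X, IsOpen U → (U ∩ F).Nonempty → ∃ K ∈ 𝒦, K ⊆ U := by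
    rintro U hU ⟨z, hzU, hzF⟩
    obtain ⟨V2, hV2o, hzV2, hrel⟩ := hcc z U hU hzU
    obtain ⟨K, hKc, hKs, hVK, hKU⟩ := lemmaC hcc hwf hU hrel
    exact ⟨K, ⟨hKc, hKs, V2, hV2o, ⟨z, hzV2, hzF⟩, hVK⟩, hKU⟩
  have hne : 𝒦.Nonempty := by
    obtain ⟨K, hK, _⟩ := hprod univ isOpen_univ (by simpa using hFne)
    exact ⟨K, hK⟩
  have hdir : ∀ K₁ ∈ 𝒦, ∀ K₂ ∈ 𝒦, ∃ K₃ ∈ 𝒦, K₃ ⊆ K₁ ∧ K₃ ⊆ K₂ := by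
    rintro K₁ ⟨_, _, V₁, hV₁o, hV₁F, hV₁K⟩ K₂ ⟨_, _, V₂, hV₂o, hV₂F, hV₂K⟩
    have h12 := hmeet V₁ V₂ hV₁o hV₂o hV₁F hV₂F
    obtain ⟨K₃, hK₃, hK₃sub⟩ := hprod (V₁ ∩ V₂) (hV₁o.inter hV₂o) h12
    exact ⟨K₃, hK₃, (hK₃sub.trans inter_subset_left).trans hV₁K,
      (hK₃sub.trans inter_subset_right).trans hV₂K⟩
  have hx : ∃ x, x ∈ ⋂₀ 𝒦 ∧ x ∈ F := by
    by_contra hno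
    push_neg at hno
    have hsub : ⋂₀ 𝒦 ⊆ Fᶜ := fun y hy hyF => hno y hy hyF
    obtain ⟨K, hK, hKF⟩ := hwf 𝒦 hne (fun K hK => ⟨hK.1, hK.2.1⟩) hdir Fᶜ hFc.isOpen_compl hsub
    obtain ⟨_, _, V2, hV2o, ⟨z, hzV, hzF⟩, hVK⟩ := hK
    exact hKF (hVK hzV) hzF
  obtain ⟨x, hxK, hxF⟩ := hx
  have hFx : F = closure {x} := by
    apply Subset.antisymm
    · intro y hyF
      by_contra hy
      have hUo : IsOpen (closure {x})ᶜ := isClosed_closure.isOpen_compl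
      obtain ⟨K, hK, hKU⟩ := hprod (closure {x})ᶜ hUo ⟨y, hy, hyF⟩
      exact (hKU (hxK K hK)) (subset_closure rfl)
    · exact closure_minimal (singleton_subset_iff.mpr hxF) hFc
  refine ⟨x, hFx, ?_⟩
  intro y hy
  have hcl : closure ({y} : Set X) = closure {x} := by rw [← hy, hFx]
  exact (inseparable_iff_closure_eq.mpr hcl).eq
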